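/- arXiv:1801.05251 — 7 statements merged into one kernel-verified Lean document; each statement's English description precedes it below -/
import Mathlib

section
/- Let {x^k} be generated by the conditional gradient method with Armijo rule: x⁰ ∈ D; for each k, y^k ∈ Z(x^k), d^k = y^k − x^k with ⟨f'(x^k), d^k⟩ < 0, λ_k = θ^{m_k} where m_k is the smallest m ∈ ℤ₊ with f(x^k + θ^m d^k) ≤ f(x^k) + β θ^m ⟨f'(x^k), d^k⟩, and x^{k+1} = x^k + λ_k d^k, where β, θ ∈ (0,1). If f is pseudo-convex on D, then every limit point of {x^k} belongs to D* and lim_{k→∞} f(x^k) = f*. -/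
open Filter RealInnerProductSpace

lemma derivAux {n : ℕ} {f : EuclideanSpace ℝ (Fin n) → ℝ} {p d grad : EuclideanSpace ℝ (Fin n)} {t : ℝ}
    (h : HasGradientAt f grad (p + t • d)) :
    HasDerivAt (fun s : ℝ => f (p + s • d)) ⟪grad, d⟫ t := by
  have h1 : HasDerivAt (fun s : ℝ => p + s • d) d t := by
    simpa using ((hasDerivAt_id t).smul_const d).const_add p
  have h2 := h.hasFDerivAt.comp_hasDerivAt t h1
  exact h2

/-- Let `{x^k}` be generated by the conditional gradient method with Armijo
rule (as in Statement 5).  If `f` is pseudo-convex on `D`, then every limit point of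
`{x^k}` belongs to `D*` and `lim_{k→∞} f(x^k) = f*`. -/
theorem stmt_6 {n : ℕ} (D : Set (EuclideanSpace ℝ (Fin n)))
    (hDne : D.Nonempty) (hDconv : Convex ℝ D) (hDcl : IsClosed D)
    (hDbd : Bornology.IsBounded D)
    (f : EuclideanSpace ℝ (Fin n) → ℝ)
    (f' : EuclideanSpace ℝ (Fin n) → EuclideanSpace ℝ (Fin n))
    (hf : ∀ x ∈ D, HasGradientAt f (f' x) x)
    (hf' : ContinuousOn f' D)
    (hpc : ∀ x ∈ D, ∀ y ∈ D, 0 ≤ ⟪f' x, y - x⟫ → f x ≤ f y)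
    (β θ : ℝ) (hβ : β ∈ Set.Ioo (0 : ℝ) 1) (hθ : θ ∈ Set.Ioo (0 : ℝ) 1)
    (x y : ℕ → EuclideanSpace ℝ (Fin n)) (lam : ℕ → ℝ) (m : ℕ → ℕ)
    (hx0 : x 0 ∈ D)
    (hy : ∀ k, y k ∈ D ∧ ∀ w ∈ D, ⟪f' (x k), y k⟫ ≤ ⟪f' (x k), w⟫)
    (hdesc : ∀ k, ⟪f' (x k), y k - x k⟫ < 0)
    (harm : ∀ k, f (x k + θ ^ m k • (y k - x k)) ≤
      f (x k) + β * θ ^ m k * ⟪f' (x k), y k - x k⟫)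
    (hmmin : ∀ k, ∀ j < m k, ¬ (f (x k + θ ^ j • (y k - x k)) ≤
      f (x k) + β * θ ^ j * ⟪f' (x k), y k - x k⟫))
    (hlam : ∀ k, lam k = θ ^ m k)
    (hstep : ∀ k, x (k + 1) = x k + lam k • (y k - x k)) :
    (∀ (x' : EuclideanSpace ℝ (Fin n)) (φ : ℕ → ℕ), StrictMono φ →
        Tendsto (x ∘ φ) atTop (nhds x') →
        x' ∈ D ∧ ∀ u ∈ D, f x' ≤ f u) ∧
    Tendsto (fun k => f (x k)) atTop (nhds (sInf (f '' D))) := by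
  obtain ⟨hβ0, hβ1⟩ := hβ
  obtain ⟨hθ0, hθ1⟩ := hθ
  have hDcpt : IsCompact D := Metric.isCompact_of_isClosed_isBounded hDcl hDbd
  have hlam0 : ∀ k, 0 < lam k := fun k => (hlam k) ▸ pow_pos hθ0 _
  have hlam1 : ∀ k, lam k ≤ 1 := fun k => (hlam k) ▸ pow_le_one₀ hθ0.le hθ1.le
  -- the iterates stay in D
  have hxD : ∀ k, x k ∈ D := by
    intro k
    induction k with
    | zero => exact hx0
    | succ k ih =>
      rw [hstep k]
      have he : x k + lam k • (y k - x k) = (1 - lam k) • x k + lam k • y k := by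
        module
      rw [he]
      exact hDconv ih (hy k).1 (by linarith [hlam1 k]) (hlam0 k).le (by ring)
  have hfc : ContinuousOn f D := fun z hz => (hf z hz).continuousAt.continuousWithinAt
  set g : ℕ → ℝ := fun k => ⟪f' (x k), y k - x k⟫ with hgdef
  have hdec : ∀ k, f (x (k + 1)) ≤ f (x k) + β * lam k * g k := by
    intro k
    rw [hstep k, hlam k]
    exact harm k
  have hlg_neg : ∀ k, lam k * g k < 0 :=
    fun k => mul_neg_of_pos_of_neg (hlam0 k) (hdesc k)
  have hmono : Antitone fun k => f (x k) := by
    apply antitone_nat_of_succ_le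
    intro k
    have h1 := hdec k
    nlinarith [hlg_neg k]
  -- bounded below since f '' D is compact
  have hfDcpt : IsCompact (f '' D) := hDcpt.image_of_continuousOn hfc
  have hbdd : BddBelow (Set.range fun k => f (x k)) := by
    obtain ⟨c, hc⟩ := hfDcpt.bddBelow
    exact ⟨c, by rintro v ⟨k, rfl⟩; exact hc ⟨x k, hxD k, rfl⟩⟩
  set L : ℝ := ⨅ k, f (x k) with hLdef
  have hLtend : Tendsto (fun k => f (x k)) atTop (nhds L) :=
    tendsto_atTop_ciInf hmono hbdd
  -- βλₖgₖ → 0 hence λₖ gₖ → 0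
  have hgl0 : Tendsto (fun k => lam k * g k) atTop (nhds 0) := by
    have hdiff : Tendsto (fun k => (f (x (k + 1)) - f (x k)) / β) atTop (nhds 0) := by
      have := ((hLtend.comp (tendsto_add_atTop_nat 1)).sub hLtend).div_const β
      simpa using this
    refine tendsto_of_tendsto_of_tendsto_of_le_of_le hdiff tendsto_const_nhds
      (fun k => ?_) (fun k => (hlg_neg k).le)
    rw [div_le_iff₀ hβ0]
    nlinarith [hdec k]
  -- the key limit-point property
  have key : ∀ (x' : EuclideanSpace ℝ (Fin n)) (φ : ℕ → ℕ), StrictMono φ →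
      Tendsto (x ∘ φ) atTop (nhds x') → x' ∈ D ∧ ∀ u ∈ D, f x' ≤ f u := by
    intro x' φ hφ hxt
    have hx'D : x' ∈ D := hDcl.mem_of_tendsto hxt (Eventually.of_forall fun k => hxD _)
    obtain ⟨y', hy'D, ψ, hψ, hyt⟩ := hDcpt.tendsto_subseq (x := fun k => y (φ k))
      (fun k => (hy (φ k)).1)
    obtain ⟨l', hl'mem, ψ2, hψ2, hlt⟩ := (isCompact_Icc (a := (0:ℝ)) (b := 1)).tendsto_subseq
      (x := fun k => lam (φ (ψ k))) (fun k => ⟨(hlam0 _).le, hlam1 _⟩)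
    set σ : ℕ → ℕ := fun k => φ (ψ (ψ2 k)) with hσdef
    have hσ : StrictMono σ := hφ.comp (hψ.comp hψ2)
    have hxσ : Tendsto (fun k => x (σ k)) atTop (nhds x') :=
      hxt.comp ((hψ.comp hψ2).tendsto_atTop)
    have hyσ : Tendsto (fun k => y (σ k)) atTop (nhds y') := hyt.comp hψ2.tendsto_atTop
    have hlσ : Tendsto (fun k => lam (σ k)) atTop (nhds l') := hlt
    have hxσD : ∀ k, x (σ k) ∈ D := fun k => hxD _
    have hxσ' : Tendsto (fun k => x (σ k)) atTop (nhdsWithin x' D) :=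
      tendsto_nhdsWithin_of_tendsto_nhds_of_eventually_within _ hxσ
        (Eventually.of_forall hxσD)
    have hf'σ : Tendsto (fun k => f' (x (σ k))) atTop (nhds (f' x')) :=
      ((hf' x' hx'D).tendsto).comp hxσ'
    set g' : ℝ := ⟪f' x', y' - x'⟫ with hg'def
    have hgσ : Tendsto (fun k => g (σ k)) atTop (nhds g') :=
      hf'σ.inner (hyσ.sub hxσ)
    have hg'le : g' ≤ 0 := le_of_tendsto hgσ (Eventually.of_forall fun k => (hdesc _).le)
    have hlgσ : Tendsto (fun k => lam (σ k) * g (σ k)) atTop (nhds 0) :=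
      hgl0.comp hσ.tendsto_atTop
    have hl'g' : l' * g' = 0 := tendsto_nhds_unique (hlσ.mul hgσ) hlgσ
    -- MVT auxiliary statement
    have hMVT : ∀ k, 1 ≤ m k → ∃ c ∈ Set.Ioo (0:ℝ) (θ ^ (m k - 1)),
        β * g k < ⟪f' (x k + c • (y k - x k)), y k - x k⟫ := by
      intro k hk
      set s : ℝ := θ ^ (m k - 1) with hsdef
      have hs0 : 0 < s := pow_pos hθ0 _
      have hs1 : s ≤ 1 := pow_le_one₀ hθ0.le hθ1.le
      set d : EuclideanSpace ℝ (Fin n) := y k - x k with hddef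
      have hseg : ∀ t ∈ Set.Icc (0:ℝ) s, x k + t • d ∈ D := by
        intro t ht
        have he : x k + t • d = (1 - t) • x k + t • y k := by
          rw [hddef]; module
        rw [he]
        exact hDconv (hxD k) (hy k).1 (by linarith [ht.1, ht.2]) ht.1 (by ring)
      have hcont : ContinuousOn (fun t : ℝ => f (x k + t • d)) (Set.Icc 0 s) := by
        refine hfc.comp ?_ hseg
        exact (continuous_const.add (continuous_id.smul continuous_const)).continuousOn
      have hderiv : ∀ t ∈ Set.Ioo (0:ℝ) s,
          HasDerivAt (fun t : ℝ => f (x k + t • d)) ⟪f' (x k + t • d), d⟫ t := by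
        intro t ht
        exact derivAux (hf _ (hseg t ⟨ht.1.le, ht.2.le⟩))
      obtain ⟨c, hc, hceq⟩ := exists_hasDerivAt_eq_slope (fun t : ℝ => f (x k + t • d))
        (fun t => ⟪f' (x k + t • d), d⟫) hs0 hcont hderiv
      refine ⟨c, hc, ?_⟩
      have hmm := hmmin k (m k - 1) (by omega)
      push_neg at hmm
      rw [← hsdef] at hmm
      rw [← hddef] at hmm
      rw [hceq]
      simp only [zero_smul, add_zero, sub_zero]
      rw [lt_div_iff₀ hs0]
      nlinarith [hmm]
    -- the crucial fact: g' = 0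
    have hg'0 : g' = 0 := by
      rcases mul_eq_zero.1 hl'g' with hl0 | hg0
      · -- λ → 0 case : use Armijo minimality + MVT
        rw [hl0] at hlσ
        -- eventually m (σ k) ≥ 1
        have hev : ∀ᶠ k in atTop, 1 ≤ m (σ k) := by
          have h1 : ∀ᶠ k in atTop, lam (σ k) < 1 :=
            hlσ.eventually (Filter.Tendsto.eventually_lt_const (v := (0:ℝ)) (u := 1) (f := fun z : ℝ => z) (by norm_num) tendsto_id) |>.mono
              (fun k hk => hk)
          refine h1.mono fun k hk => ?_
          by_contra hc
          push_neg at hc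
          interval_cases hm : m (σ k)
          · rw [hlam (σ k), hm] at hk; simp at hk
        obtain ⟨N, hN⟩ := eventually_atTop.1 hev
        set τ : ℕ → ℕ := fun k => σ (k + N) with hτdef
        have hshift : Tendsto (fun k : ℕ => k + N) atTop atTop := tendsto_add_atTop_nat N
        have hxτ : Tendsto (fun k => x (τ k)) atTop (nhds x') := hxσ.comp hshift
        have hyτ : Tendsto (fun k => y (τ k)) atTop (nhds y') := hyσ.comp hshift
        have hlτ : Tendsto (fun k => lam (τ k)) atTop (nhds 0) := hlσ.comp hshift
        have hmτ : ∀ k, 1 ≤ m (τ k) := fun k => hN (k + N) (Nat.le_add_left N k)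
        choose c hcmem hclt using fun k => hMVT (τ k) (hmτ k)
        have hsτ : ∀ k, θ ^ (m (τ k) - 1) = lam (τ k) / θ := by
          intro k
          rw [hlam (τ k)]
          rw [eq_div_iff (ne_of_gt hθ0), ← pow_succ]
          congr 1
          have := hmτ k
          omega
        have hc0 : Tendsto c atTop (nhds 0) := by
          have hup : Tendsto (fun k => lam (τ k) / θ) atTop (nhds 0) := by
            simpa using hlτ.div_const θ
          refine tendsto_of_tendsto_of_tendsto_of_le_of_le tendsto_const_nhds hup
            (fun k => (hcmem k).1.le) (fun k => ?_)
          rw [← hsτ k]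
          exact (hcmem k).2.le
        set ξ : ℕ → EuclideanSpace ℝ (Fin n) := fun k => x (τ k) + c k • (y (τ k) - x (τ k))
          with hξdef
        have hξD : ∀ k, ξ k ∈ D := by
          intro k
          have hck : c k ∈ Set.Icc (0:ℝ) 1 := by
            refine ⟨(hcmem k).1.le, ?_⟩
            have := (hcmem k).2.le
            have h1 : θ ^ (m (τ k) - 1) ≤ 1 := pow_le_one₀ hθ0.le hθ1.le
            linarith
          have he : ξ k = (1 - c k) • x (τ k) + c k • y (τ k) := by
            rw [hξdef]; module
          rw [he]
          exact hDconv (hxD _) (hy _).1 (by linarith [hck.2]) hck.1 (by ring)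
        have hξt : Tendsto ξ atTop (nhds x') := by
          have := hxτ.add (hc0.smul (hyτ.sub hxτ))
          simpa using this
        have hξt' : Tendsto ξ atTop (nhdsWithin x' D) :=
          tendsto_nhdsWithin_of_tendsto_nhds_of_eventually_within _ hξt
            (Eventually.of_forall hξD)
        have hf'ξ : Tendsto (fun k => f' (ξ k)) atTop (nhds (f' x')) :=
          ((hf' x' hx'D).tendsto).comp hξt'
        have hinner : Tendsto (fun k => ⟪f' (ξ k), y (τ k) - x (τ k)⟫) atTop (nhds g') :=
          hf'ξ.inner (hyτ.sub hxτ)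
        have hgτ : Tendsto (fun k => g (τ k)) atTop (nhds g') := hgσ.comp hshift
        have hle : β * g' ≤ g' :=
          le_of_tendsto_of_tendsto' (hgτ.const_mul β) hinner fun k => (hclt k).le
        nlinarith [hg'le, hle]
      · exact hg0
    -- conclude via the linearized problem
    refine ⟨hx'D, fun u hu => ?_⟩
    apply hpc x' hx'D u hu
    have hlin : Tendsto (fun k => ⟪f' (x (σ k)), u - x (σ k)⟫) atTop
        (nhds ⟪f' x', u - x'⟫) :=
      hf'σ.inner (tendsto_const_nhds.sub hxσ)
    have hge : ∀ k, g (σ k) ≤ ⟪f' (x (σ k)), u - x (σ k)⟫ := by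
      intro k
      have h2 := (hy (σ k)).2 u hu
      have e1 : g (σ k) = ⟪f' (x (σ k)), y (σ k)⟫ - ⟪f' (x (σ k)), x (σ k)⟫ := by
        rw [hgdef]; simp [inner_sub_right]
      have e2 : ⟪f' (x (σ k)), u - x (σ k)⟫
          = ⟪f' (x (σ k)), u⟫ - ⟪f' (x (σ k)), x (σ k)⟫ := by
        simp [inner_sub_right]
      rw [e1, e2]
      linarith
    have := le_of_tendsto_of_tendsto' hgσ hlin hge
    rw [hg'0] at this
    exact this
  refine ⟨key, ?_⟩
  -- second part: f(xᵏ) → inf f over D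
  obtain ⟨x', hx'D, φ, hφ, hxt⟩ := hDcpt.tendsto_subseq (x := x) hxD
  obtain ⟨_, hmin⟩ := key x' φ hφ hxt
  have hxt' : Tendsto (x ∘ φ) atTop (nhdsWithin x' D) :=
    tendsto_nhdsWithin_of_tendsto_nhds_of_eventually_within _ hxt
      (Eventually.of_forall fun k => hxD _)
  have h1 : Tendsto (fun k => f (x (φ k))) atTop (nhds (f x')) :=
    ((hfc x' hx'D).tendsto).comp hxt'
  have h2 : Tendsto (fun k => f (x (φ k))) atTop (nhds L) :=
    hLtend.comp hφ.tendsto_atTop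
  have hLf : L = f x' := tendsto_nhds_unique h2 h1
  have hsinf : sInf (f '' D) = f x' := by
    refine IsLeast.csInf_eq ⟨⟨x', hx'D, rfl⟩, ?_⟩
    rintro b ⟨u, hu, rfl⟩
    exact hmin u hu
  rw [hsinf, ← hLf]
  exact hLtend
end

section
/- Suppose f is convex and f' is Lipschitz continuous on D with constant L > 0. Let {x^k} be generated by the conditional gradient method x^{k+1} = x^k + λ_k d^k, where d^k = y^k − x^k, y^k ∈ Z(x^k), and λ_k = min{1, θ_k σ_k} with σ_k = −⟨f'(x^k), d^k⟩ / ‖d^k‖² and θ_k ∈ [θ', θ''] for fixed 0 < θ' ≤ θ'' < 2/L. Then there exists a constant C < +∞ such that f(x^k) − f* ≤ C/k for all k ≥ 1. -/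
open Filter RealInnerProductSpace Set

lemma aux_hasDerivAt {E : Type*} [NormedAddCommGroup E] [InnerProductSpace ℝ E] [CompleteSpace E]
    {f : E → ℝ} {g : E} (x v : E) (t : ℝ)
    (hg : HasGradientAt f g (x + t • v)) :
    HasDerivAt (fun s : ℝ => f (x + s • v)) ⟪g, v⟫ t := by
  have hc : HasDerivAt (fun s : ℝ => x + s • v) v t := by
    simpa using ((hasDerivAt_id t).smul_const v).const_add x
  have := hg.hasFDerivAt.comp_hasDerivAt t hc
  simp at this
  exact this

lemma aux_convex_grad {E : Type*} [NormedAddCommGroup E] [InnerProductSpace ℝ E] [CompleteSpace E]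
    {D : Set E} {f : E → ℝ} (hfc : ConvexOn ℝ D f) {g x z : E}
    (hx : x ∈ D) (hz : z ∈ D) (hg : HasGradientAt f g x) :
    f x + ⟪g, z - x⟫ ≤ f z := by
  have hd : HasDerivAt (fun s : ℝ => f (x + s • (z - x))) ⟪g, z - x⟫ 0 :=
    aux_hasDerivAt x (z - x) 0 (by simpa using hg)
  have hslope := hasDerivAt_iff_tendsto_slope.mp hd
  have hsub : Set.Ioi (0:ℝ) ⊆ {(0:ℝ)}ᶜ := fun t ht => by
    simpa using (ne_of_gt ht)
  have hslope' := hslope.mono_left (nhdsWithin_mono 0 hsub)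
  have key : ⟪g, z - x⟫ ≤ f z - f x := by
    refine le_of_tendsto hslope' ?_
    filter_upwards [Ioc_mem_nhdsGT_of_mem (Set.left_mem_Ico.mpr one_pos)] with t ht
    have ht0 : (0:ℝ) < t := ht.1
    have ht1 : t ≤ 1 := ht.2
    have hpt : x + t • (z - x) = (1 - t) • x + t • z := by module
    have hconv := hfc.2 hx hz (by linarith : (0:ℝ) ≤ 1 - t) ht0.le (by ring)
    rw [slope_def_field]
    simp only [zero_smul, add_zero, sub_zero]
    rw [div_le_iff₀ ht0, hpt]
    simp only [smul_eq_mul] at hconv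
    nlinarith [hconv]
  linarith

lemma aux_descent {E : Type*} [NormedAddCommGroup E] [InnerProductSpace ℝ E] [CompleteSpace E]
    {D : Set E} (hDconv : Convex ℝ D) {f : E → ℝ} {f' : E → E}
    (hf : ∀ p ∈ D, HasGradientAt f (f' p) p)
    {L : ℝ} (hL : 0 ≤ L)
    (hLip : ∀ p ∈ D, ∀ q ∈ D, ‖f' q - f' p‖ ≤ L * ‖q - p‖)
    {x y : E} (hx : x ∈ D) (hy : y ∈ D) {lam : ℝ} (h0 : 0 ≤ lam) (h1 : lam ≤ 1) :
    f (x + lam • (y - x)) ≤ f x + lam * ⟪f' x, y - x⟫ + L / 2 * lam ^ 2 * ‖y - x‖ ^ 2 := by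
  set d := y - x with hdd
  have hmem : ∀ t ∈ Set.Icc (0:ℝ) 1, x + t • d ∈ D := by
    intro t ht
    have hpt : x + t • d = (1 - t) • x + t • y := by rw [hdd]; module
    rw [hpt]
    exact hDconv hx hy (by linarith [ht.2]) ht.1 (by ring)
  set χ : ℝ → ℝ := fun t => f (x + t • d) - t * ⟪f' x, d⟫ - L / 2 * t ^ 2 * ‖d‖ ^ 2 with hχ
  have hder : ∀ t ∈ Set.Icc (0:ℝ) lam,
      HasDerivAt χ (⟪f' (x + t • d), d⟫ - ⟪f' x, d⟫ - L / 2 * (2 * t) * ‖d‖ ^ 2) t := by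
    intro t ht
    have htm : t ∈ Set.Icc (0:ℝ) 1 := ⟨ht.1, ht.2.trans h1⟩
    have h1' : HasDerivAt (fun s : ℝ => f (x + s • d)) ⟪f' (x + t • d), d⟫ t :=
      aux_hasDerivAt x d t (hf _ (hmem t htm))
    have h2 : HasDerivAt (fun s : ℝ => s * ⟪f' x, d⟫) ⟪f' x, d⟫ t := by
      simpa using (hasDerivAt_id t).mul_const (⟪f' x, d⟫)
    have h3 : HasDerivAt (fun s : ℝ => L / 2 * s ^ 2 * ‖d‖ ^ 2) (L / 2 * (2 * t) * ‖d‖ ^ 2) t := by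
      have := ((hasDerivAt_pow 2 t).const_mul (L / 2)).mul_const (‖d‖ ^ 2)
      simpa using this
    exact (h1'.sub h2).sub h3
  rcases h0.eq_or_lt with heq | hlampos
  · rw [← heq]; simp
  have hχmono : AntitoneOn χ (Set.Icc 0 lam) := by
    apply antitoneOn_of_deriv_nonpos (convex_Icc 0 lam)
    · intro t ht
      exact ((hder t ht).differentiableAt.continuousAt).continuousWithinAt
    · intro t ht
      rw [interior_Icc] at ht
      exact ((hder t ⟨ht.1.le, ht.2.le⟩).differentiableAt).differentiableWithinAt
    · intro t ht
      rw [interior_Icc] at ht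
      have hD := hder t ⟨ht.1.le, ht.2.le⟩
      rw [hD.deriv]
      have hpt : x + t • d ∈ D := hmem t ⟨ht.1.le, ht.2.le.trans h1⟩
      have hcs : ⟪f' (x + t • d) - f' x, d⟫ ≤ ‖f' (x + t • d) - f' x‖ * ‖d‖ :=
        real_inner_le_norm _ _
      have hlip := hLip x hx _ hpt
      have hnorm : ‖x + t • d - x‖ = t * ‖d‖ := by
        simp [norm_smul, abs_of_nonneg ht.1.le]
      rw [hnorm] at hlip
      have hdiff : ⟪f' (x + t • d), d⟫ - ⟪f' x, d⟫ = ⟪f' (x + t • d) - f' x, d⟫ :=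
        (inner_sub_left _ _ _).symm
      rw [hdiff]
      have hnn : (0:ℝ) ≤ ‖d‖ := norm_nonneg d
      nlinarith [hcs, hlip, hnn, ht.1.le, mul_le_mul_of_nonneg_right hlip hnn]
  have hle := hχmono (Set.left_mem_Icc.mpr h0) (Set.right_mem_Icc.mpr h0) h0
  simp only [hχ, zero_smul, add_zero, zero_mul, sub_zero] at hle
  have h00 : L / 2 * (0:ℝ) ^ 2 * ‖d‖ ^ 2 = 0 := by ring
  rw [h00] at hle
  linarith [hle]

lemma aux_seq (u : ℕ → ℝ) (c : ℝ) (hc : 0 < c) (hu : ∀ k, 0 ≤ u k)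
    (hrec : ∀ k, u (k + 1) ≤ u k - c * u k ^ 2) :
    ∀ k : ℕ, 1 ≤ k → u k ≤ 1 / (c * k) := by
  intro k hk
  induction k with
  | zero => omega
  | succ m ih =>
    rcases Nat.eq_zero_or_pos m with rfl | hm
    · have h := hrec 0
      have h0 := hu 0
      have : u 1 ≤ 1 / c := by
        rw [le_div_iff₀ hc]
        nlinarith [sq_nonneg (c * u 0 - 1)]
      simpa using this
    · have ihm := ih hm
      have hrecm := hrec m
      have hum := hu m
      have hK : (1:ℝ) ≤ (m:ℝ) := by exact_mod_cast hm
      have hcK : (0:ℝ) < c * m := by positivity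
      have hs : u m * (c * m) ≤ 1 := (le_div_iff₀ hcK).mp ihm
      have hcu1 : c * u m ≤ 1 := by nlinarith [mul_nonneg (mul_nonneg hc.le hum) (sub_nonneg.mpr hK)]
      have hgoal : u (m + 1) * (c * ((m:ℝ) + 1)) ≤ 1 := by
        nlinarith [mul_nonneg (sub_nonneg.mpr hs) (sub_nonneg.mpr hcu1),
          sq_nonneg (c * u m), mul_pos hc (lt_of_lt_of_le one_pos hK)]
      have : u (m + 1) ≤ 1 / (c * ((m:ℝ) + 1)) := by
        rw [le_div_iff₀ (by positivity)]; exact hgoal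
      simpa [Nat.cast_succ] using this

lemma aux_case2 {θ θ' θ'' L M nd Δ : ℝ} (hθ1 : θ' ≤ θ) (hθ2 : θ ≤ θ'')
    (hθ'pos : 0 < θ') (hL : 0 ≤ L) (hnd : 0 < nd) (hndM : nd ≤ M ^ 2)
    (hΔ : 0 ≤ Δ) (hM : 0 < M) (hα : 0 < 1 - L * θ'' / 2) :
    θ' * (1 - L * θ'' / 2) / M ^ 2 * Δ ^ 2
      ≤ θ * (Δ / nd) * Δ - L / 2 * (θ * (Δ / nd)) ^ 2 * nd := by
  have hθpos : 0 < θ := lt_of_lt_of_le hθ'pos hθ1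
  have hrhs : θ * (Δ / nd) * Δ - L / 2 * (θ * (Δ / nd)) ^ 2 * nd
      = θ * (Δ ^ 2 / nd) * (1 - L * θ / 2) := by
    field_simp
  rw [hrhs]
  have h2 : Δ ^ 2 / M ^ 2 ≤ Δ ^ 2 / nd :=
    div_le_div_of_nonneg_left (sq_nonneg _) hnd hndM
  have hfac2 : 1 - L * θ'' / 2 ≤ 1 - L * θ / 2 := by nlinarith
  have hnn1 : (0:ℝ) ≤ Δ ^ 2 / M ^ 2 := by positivity
  have hlhs : θ' * (1 - L * θ'' / 2) / M ^ 2 * Δ ^ 2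
      = θ' * (Δ ^ 2 / M ^ 2) * (1 - L * θ'' / 2) := by ring
  rw [hlhs]
  calc θ' * (Δ ^ 2 / M ^ 2) * (1 - L * θ'' / 2)
      ≤ θ * (Δ ^ 2 / nd) * (1 - L * θ'' / 2) := by
        apply mul_le_mul_of_nonneg_right _ hα.le
        exact mul_le_mul hθ1 h2 hnn1 hθpos.le
    _ ≤ θ * (Δ ^ 2 / nd) * (1 - L * θ / 2) := by
        apply mul_le_mul_of_nonneg_left hfac2 (by positivity)

set_option maxHeartbeats 1000000 in
/-- Suppose `f` is convex and `f'` is Lipschitz continuous on `D` with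
constant `L > 0`.  Let `{x^k}` be generated by the conditional gradient method
`x^{k+1} = x^k + λ_k d^k`, where `d^k = y^k − x^k`, `y^k ∈ Z(x^k)`, and
`λ_k = min{1, θ_k σ_k}` with `σ_k = −⟪f'(x^k), d^k⟫ / ‖d^k‖²` and `θ_k ∈ [θ', θ'']` for
fixed `0 < θ' ≤ θ'' < 2/L`.  Then there exists a constant `C < +∞` such that
`f(x^k) − f* ≤ C/k` for all `k ≥ 1`. -/
theorem stmt_7 {n : ℕ} (D : Set (EuclideanSpace ℝ (Fin n)))
    (hDne : D.Nonempty) (hDconv : Convex ℝ D) (hDcl : IsClosed D)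
    (hDbd : Bornology.IsBounded D)
    (f : EuclideanSpace ℝ (Fin n) → ℝ)
    (f' : EuclideanSpace ℝ (Fin n) → EuclideanSpace ℝ (Fin n))
    (hf : ∀ x ∈ D, HasGradientAt f (f' x) x)
    (hf' : ContinuousOn f' D)
    (hfc : ConvexOn ℝ D f)
    (L : ℝ) (hL : 0 < L)
    (hLip : ∀ x ∈ D, ∀ y ∈ D, ‖f' y - f' x‖ ≤ L * ‖y - x‖)
    (θ' θ'' : ℝ) (hθ' : 0 < θ') (hθ'θ'' : θ' ≤ θ'') (hθ'' : θ'' < 2 / L)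
    (θk : ℕ → ℝ) (hθk : ∀ k, θk k ∈ Set.Icc θ' θ'')
    (x y : ℕ → EuclideanSpace ℝ (Fin n)) (lam : ℕ → ℝ)
    (hx0 : x 0 ∈ D)
    (hy : ∀ k, y k ∈ D ∧ ∀ w ∈ D, ⟪f' (x k), y k⟫ ≤ ⟪f' (x k), w⟫)
    (hlam : ∀ k, lam k =
      min 1 (θk k * (-⟪f' (x k), y k - x k⟫ / ‖y k - x k‖ ^ 2)))
    (hstep : ∀ k, x (k + 1) = x k + lam k • (y k - x k)) :
    ∃ C : ℝ, ∀ k : ℕ, 1 ≤ k → f (x k) - sInf (f '' D) ≤ C / k := by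
  classical
  have hDcomp : IsCompact D := Metric.isCompact_of_isClosed_isBounded hDcl hDbd
  have hfcont : ContinuousOn f D := fun p hp =>
    ((hf p hp).differentiableAt.continuousAt).continuousWithinAt
  have himg : (f '' D).Nonempty := hDne.image f
  have hbdd : BddBelow (f '' D) := (hDcomp.image_of_continuousOn hfcont).bddBelow
  obtain ⟨fstar, hfstar⟩ : ∃ c : ℝ, c = sInf (f '' D) := ⟨_, rfl⟩
  obtain ⟨M0, hM0⟩ := Metric.isBounded_iff.mp hDbd
  obtain ⟨M, hM⟩ : ∃ M : ℝ, M = max M0 1 := ⟨_, rfl⟩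
  have hM1 : (1:ℝ) ≤ M := hM ▸ le_max_right _ _
  have hMpos : (0:ℝ) < M := lt_of_lt_of_le one_pos hM1
  have hMd : ∀ p ∈ D, ∀ q ∈ D, ‖q - p‖ ≤ M := by
    intro p hp q hq
    have h1 : dist q p ≤ M0 := hM0 hq hp
    rw [dist_eq_norm] at h1
    rw [hM]
    exact h1.trans (le_max_left _ _)
  have hLθ : L * θ'' < 2 := by
    rw [lt_div_iff₀ hL] at hθ''
    linarith
  obtain ⟨α, hα⟩ : ∃ a : ℝ, a = 1 - L * θ'' / 2 := ⟨_, rfl⟩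
  have hαpos : (0:ℝ) < α := by rw [hα]; linarith
  obtain ⟨β, hβ⟩ : ∃ b : ℝ, b = θ' * α / M ^ 2 := ⟨_, rfl⟩
  have hβpos : (0:ℝ) < β := by rw [hβ]; positivity
  have hΔnn : ∀ k, x k ∈ D → 0 ≤ -⟪f' (x k), y k - x k⟫ := by
    intro k hxk
    have h1 := (hy k).2 (x k) hxk
    rw [inner_sub_right]
    linarith
  have hlam01 : ∀ k, x k ∈ D → 0 ≤ lam k ∧ lam k ≤ 1 := by
    intro k hxk
    refine ⟨?_, by rw [hlam k]; exact min_le_left _ _⟩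
    rw [hlam k]
    refine le_min zero_le_one (mul_nonneg (le_trans hθ'.le (hθk k).1) ?_)
    exact div_nonneg (hΔnn k hxk) (by positivity)
  have hxmem : ∀ k, x k ∈ D := by
    intro k
    induction k with
    | zero => exact hx0
    | succ m ih =>
      obtain ⟨h0, h1⟩ := hlam01 m ih
      rw [hstep m]
      have hpt : x m + lam m • (y m - x m) = (1 - lam m) • x m + lam m • y m := by module
      rw [hpt]
      exact hDconv ih (hy m).1 (by linarith) h0 (by ring)
  obtain ⟨Δ, hΔdef⟩ : ∃ Δ : ℕ → ℝ, ∀ k, Δ k = -⟪f' (x k), y k - x k⟫ :=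
    ⟨_, fun _ => rfl⟩
  have hΔ0 : ∀ k, 0 ≤ Δ k := fun k => (hΔdef k) ▸ hΔnn k (hxmem k)
  obtain ⟨g, hgdef⟩ : ∃ g : ℕ → ℝ, ∀ k, g k = f (x k) - fstar := ⟨_, fun _ => rfl⟩
  have hg0 : ∀ k, 0 ≤ g k := by
    intro k
    rw [hgdef k, hfstar]
    exact sub_nonneg.mpr (csInf_le hbdd ⟨x k, hxmem k, rfl⟩)
  have hgΔ : ∀ k, g k ≤ Δ k := by
    intro k
    have hkey : f (x k) - Δ k ≤ fstar := by
      rw [hfstar]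
      apply le_csInf himg
      rintro b ⟨w, hw, rfl⟩
      have hgi := aux_convex_grad hfc (hxmem k) hw (hf _ (hxmem k))
      have hcmp : ⟪f' (x k), y k - x k⟫ ≤ ⟪f' (x k), w - x k⟫ := by
        rw [inner_sub_right, inner_sub_right]
        linarith [(hy k).2 w hw]
      rw [hΔdef k]
      linarith
    rw [hgdef k]
    linarith
  have hstepineq : ∀ k, f (x (k + 1)) + min (α * Δ k) (β * Δ k ^ 2) ≤ f (x k) := by
    intro k
    by_cases hdz : y k - x k = 0
    · have hΔz : Δ k = 0 := by rw [hΔdef k, hdz, inner_zero_right]; ring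
      have hxe : x (k + 1) = x k := by rw [hstep k, hdz]; simp
      rw [hxe, hΔz]
      simp
    · have hnd : (0:ℝ) < ‖y k - x k‖ ^ 2 := by
        have h0 := norm_pos_iff.mpr hdz
        positivity
      have hθmem := hθk k
      have hθpos : 0 < θk k := lt_of_lt_of_le hθ' hθmem.1
      obtain ⟨hl0, hl1⟩ := hlam01 k (hxmem k)
      have hdesc := aux_descent hDconv hf hL.le hLip (hxmem k) (hy k).1 hl0 hl1
      rw [← hstep k] at hdesc
      have hinner : ⟪f' (x k), y k - x k⟫ = -Δ k := by rw [hΔdef k, neg_neg]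
      rw [hinner] at hdesc
      obtain ⟨nd, hndd⟩ : ∃ nd : ℝ, nd = ‖y k - x k‖ ^ 2 := ⟨_, rfl⟩
      rw [← hndd] at hdesc hnd
      have hlamk : lam k = min 1 (θk k * (Δ k / nd)) := by
        rw [hlam k, ← hΔdef k, ← hndd]
      have hndM : nd ≤ M ^ 2 := by
        have h1 := hMd (x k) (hxmem k) (y k) (hy k).1
        rw [hndd]
        nlinarith [norm_nonneg (y k - x k)]
      rcases le_total 1 (θk k * (Δ k / nd)) with hcase | hcase
      · have hlameq : lam k = 1 := by rw [hlamk]; exact min_eq_left hcase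
        rw [hlameq] at hdesc
        have hndθ : nd ≤ θk k * Δ k := by
          rw [← mul_div_assoc, one_le_div hnd] at hcase
          exact hcase
        have hL2 : (0:ℝ) ≤ L / 2 := by linarith
        have hstep1 : L / 2 * nd ≤ L / 2 * (θk k * Δ k) :=
          mul_le_mul_of_nonneg_left hndθ hL2
        have hstep2 : L / 2 * (θk k * Δ k) ≤ L / 2 * (θ'' * Δ k) := by
          apply mul_le_mul_of_nonneg_left _ hL2
          exact mul_le_mul_of_nonneg_right hθmem.2 (hΔ0 k)
        have hfin : f (x (k + 1)) + α * Δ k ≤ f (x k) := by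
          rw [hα]
          nlinarith [hdesc, hstep1, hstep2]
        calc f (x (k + 1)) + min (α * Δ k) (β * Δ k ^ 2)
            ≤ f (x (k + 1)) + α * Δ k := by
              linarith [min_le_left (α * Δ k) (β * Δ k ^ 2)]
          _ ≤ f (x k) := hfin
      · have hlameq : lam k = θk k * (Δ k / nd) := by rw [hlamk]; exact min_eq_right hcase
        rw [hlameq] at hdesc
        have hβΔ : β * Δ k ^ 2 ≤ θk k * (Δ k / nd) * Δ k
            - L / 2 * (θk k * (Δ k / nd)) ^ 2 * nd := by
          have := aux_case2 hθmem.1 hθmem.2 hθ' hL.le hnd hndM (hΔ0 k) hMpos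
            (by rw [← hα]; exact hαpos)
          rw [hβ, hα]
          exact this
        calc f (x (k + 1)) + min (α * Δ k) (β * Δ k ^ 2)
            ≤ f (x (k + 1)) + β * Δ k ^ 2 := by
              linarith [min_le_right (α * Δ k) (β * Δ k ^ 2)]
          _ ≤ f (x k) := by nlinarith [hdesc, hβΔ]
  have hmin0 : ∀ k, 0 ≤ min (α * Δ k) (β * Δ k ^ 2) := fun k =>
    le_min (mul_nonneg hαpos.le (hΔ0 k)) (mul_nonneg hβpos.le (sq_nonneg _))
  have hmono : ∀ k, g (k + 1) ≤ g k := by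
    intro k
    have h1 := hstepineq k
    have h2 := hmin0 k
    rw [hgdef (k + 1), hgdef k]
    linarith
  have hgle : ∀ k, g k ≤ g 0 := by
    intro k
    induction k with
    | zero => exact le_refl _
    | succ m ih => exact (hmono m).trans ih
  obtain ⟨Gc, hGc⟩ : ∃ G : ℝ, G = g 0 + 1 := ⟨_, rfl⟩
  have hGcpos : (0:ℝ) < Gc := by
    have := hg0 0
    rw [hGc]; linarith
  obtain ⟨c, hcdef⟩ : ∃ c : ℝ, c = min β (α / Gc) := ⟨_, rfl⟩
  have hcpos : (0:ℝ) < c := by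
    rw [hcdef]
    exact lt_min hβpos (by positivity)
  have hrec : ∀ k, g (k + 1) ≤ g k - c * g k ^ 2 := by
    intro k
    have hsi := hstepineq k
    have hgk := hg0 k
    have hgk0 : g k ≤ Gc := by
      have := hgle k
      rw [hGc]; linarith
    have hΔk := hΔ0 k
    have hgΔk := hgΔ k
    have h1 : c * g k ^ 2 ≤ min (α * Δ k) (β * Δ k ^ 2) := by
      apply le_min
      · have hcGc : c * Gc ≤ α := by
          have hcle : c ≤ α / Gc := hcdef ▸ min_le_right _ _
          rw [le_div_iff₀ hGcpos] at hcle
          exact hcle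
        nlinarith [mul_nonneg (mul_nonneg hcpos.le hgk) (sub_nonneg.mpr hgk0),
          mul_nonneg (sub_nonneg.mpr hcGc) hgk,
          mul_le_mul_of_nonneg_left hgΔk hαpos.le]
      · have hcβ : c ≤ β := hcdef ▸ min_le_left _ _
        nlinarith [mul_nonneg (sub_nonneg.mpr hcβ) (sq_nonneg (g k)),
          mul_le_mul_of_nonneg_left (mul_le_mul hgΔk hgΔk hgk hΔk) hβpos.le]
    rw [hgdef (k + 1)]
    rw [hgdef k] at h1 ⊢
    linarith
  have hbound := aux_seq g c hcpos hg0 hrec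
  refine ⟨1 / c, fun k hk => ?_⟩
  have hb := hbound k hk
  have heq : (1:ℝ) / (c * k) = (1 / c) / (k:ℝ) := by rw [div_div]
  rw [heq, hgdef k, hfstar] at hb
  exact hb
end

section
/- Each stage of the inexact conditional gradient method (CGMI) is finite: fix δ > 0, β, θ ∈ (0,1). There is no infinite sequence {x^k} ⊂ D with points z^k ∈ D such that for every k: ⟨f'(x^k), x^k − z^k⟩ ≥ δ, d^k = z^k − x^k, λ_k = θ^{m_k} where m_k is the smallest m ∈ ℤ₊ with f(x^k + θ^m d^k) ≤ f(x^k) + β θ^m ⟨f'(x^k), d^k⟩, and x^{k+1} = x^k + λ_k d^k. -/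
open Filter RealInnerProductSpace

/-- Each stage of the inexact conditional gradient method (CGMI) is
finite: fix `δ > 0`, `β, θ ∈ (0,1)`.  There is no infinite sequence `{x^k} ⊂ D` with
points `z^k ∈ D` such that for every `k`: `⟪f'(x^k), x^k − z^k⟫ ≥ δ`, `d^k = z^k − x^k`,
`λ_k = θ^{m_k}` where `m_k` is the smallest `m ∈ ℤ₊` with
`f(x^k + θ^m d^k) ≤ f(x^k) + β θ^m ⟪f'(x^k), d^k⟫`, and `x^{k+1} = x^k + λ_k d^k`. -/
theorem stmt_11 {n : ℕ} (D : Set (EuclideanSpace ℝ (Fin n)))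
    (hDne : D.Nonempty) (hDconv : Convex ℝ D) (hDcl : IsClosed D)
    (hDbd : Bornology.IsBounded D)
    (f : EuclideanSpace ℝ (Fin n) → ℝ)
    (f' : EuclideanSpace ℝ (Fin n) → EuclideanSpace ℝ (Fin n))
    (hf : ∀ x ∈ D, HasGradientAt f (f' x) x)
    (hf' : ContinuousOn f' D)
    (β θ δ : ℝ) (hβ : β ∈ Set.Ioo (0 : ℝ) 1) (hθ : θ ∈ Set.Ioo (0 : ℝ) 1) (hδ : 0 < δ)
    (x z : ℕ → EuclideanSpace ℝ (Fin n)) (lam : ℕ → ℝ) (m : ℕ → ℕ)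
    (hxD : ∀ k, x k ∈ D) (hzD : ∀ k, z k ∈ D)
    (hgap : ∀ k, δ ≤ ⟪f' (x k), x k - z k⟫)
    (harm : ∀ k, f (x k + θ ^ m k • (z k - x k)) ≤
      f (x k) + β * θ ^ m k * ⟪f' (x k), z k - x k⟫)
    (hmmin : ∀ k, ∀ j < m k, ¬ (f (x k + θ ^ j • (z k - x k)) ≤
      f (x k) + β * θ ^ j * ⟪f' (x k), z k - x k⟫))
    (hlam : ∀ k, lam k = θ ^ m k)
    (hstep : ∀ k, x (k + 1) = x k + lam k • (z k - x k)) :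
    False := by
  obtain ⟨hβ0, hβ1⟩ := hβ
  obtain ⟨hθ0, hθ1⟩ := hθ
  have hDcomp : IsCompact D := Metric.isCompact_of_isClosed_isBounded hDcl hDbd
  -- descent direction inequality
  have hdneg : ∀ k, ⟪f' (x k), z k - x k⟫ ≤ -δ := by
    intro k
    have := hgap k
    have h : ⟪f' (x k), z k - x k⟫ = -⟪f' (x k), x k - z k⟫ := by
      rw [← inner_neg_right, neg_sub]
    linarith [h ▸ neg_le_neg this]
  -- bound on diameter
  obtain ⟨C, hC⟩ := Metric.isBounded_iff.mp hDbd
  set M : ℝ := max C 1 with hM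
  have hM0 : (0 : ℝ) < M := lt_of_lt_of_le one_pos (le_max_right _ _)
  have hdM : ∀ k, ‖z k - x k‖ ≤ M := by
    intro k
    have : dist (z k) (x k) ≤ C := hC (hzD k) (hxD k)
    rw [dist_eq_norm] at this
    exact this.trans (le_max_left _ _)
  -- uniform continuity of f'
  have hUC := Metric.uniformContinuousOn_iff.mp
    (hDcomp.uniformContinuousOn_of_continuous hf')
  obtain ⟨ε, hε0, hε⟩ := hUC ((1 - β) * δ / M)
    (div_pos (mul_pos (by linarith) hδ) hM0)
  -- segment membership
  have hseg : ∀ k, ∀ t : ℝ, 0 ≤ t → t ≤ 1 → x k + t • (z k - x k) ∈ D := by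
    intro k t h0 h1
    exact hDconv.add_smul_sub_mem (hxD k) (hzD k) ⟨h0, h1⟩
  -- continuity of f on D
  have hfc : ContinuousOn f D := fun p hp =>
    (hf p hp).hasFDerivAt.differentiableAt.continuousAt.continuousWithinAt
  -- the key claim: Armijo holds for t small enough
  have claim : ∀ k, ∀ t : ℝ, 0 < t → t ≤ 1 → t * M < ε →
      f (x k + t • (z k - x k)) ≤ f (x k) + β * t * ⟪f' (x k), z k - x k⟫ := by
    intro k t ht0 ht1 htM
    set d := z k - x k with hdd
    set g : ℝ → ℝ := fun s => f (x k + s • d) with hg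
    have hder : ∀ s ∈ Set.Icc (0:ℝ) t, HasDerivAt g ⟪f' (x k + s • d), d⟫ s := by
      intro s hs
      have hsD : x k + s • d ∈ D := hseg k s hs.1 (hs.2.trans ht1)
      have hline : HasDerivAt (fun s : ℝ => x k + s • d) d s := by
        simpa using ((hasDerivAt_id s).smul_const d).const_add (x k)
      have := (hf _ hsD).hasFDerivAt.comp_hasDerivAt s hline
      simp [InnerProductSpace.toDual_apply_apply] at this
      exact this
    have hcont : ContinuousOn g (Set.Icc 0 t) := fun s hs =>
      (hder s hs).continuousAt.continuousWithinAt
    obtain ⟨c, hc, hslope⟩ := exists_hasDerivAt_eq_slope g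
      (fun s => ⟪f' (x k + s • d), d⟫) ht0 hcont
      (fun s hs => hder s ⟨hs.1.le, hs.2.le⟩)
    -- bound the inner product at the interior point
    set ξ := x k + c • d with hξ
    have hc0 : 0 < c := hc.1
    have hct : c < t := hc.2
    have hξD : ξ ∈ D := hseg k c hc0.le (hct.le.trans ht1)
    have hdist : dist ξ (x k) < ε := by
      have : dist ξ (x k) = c * ‖d‖ := by
        rw [dist_eq_norm]
        simp [hξ, norm_smul, abs_of_pos hc0]
      rw [this]
      calc c * ‖d‖ ≤ t * M := by
            apply mul_le_mul hct.le (hdM k) (norm_nonneg _) (le_of_lt ht0)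
        _ < ε := htM
    have hnd : dist (f' ξ) (f' (x k)) < (1 - β) * δ / M := hε ξ hξD (x k) (hxD k) hdist
    have hib : ⟪f' ξ - f' (x k), d⟫ < (1 - β) * δ := by
      calc ⟪f' ξ - f' (x k), d⟫ ≤ ‖f' ξ - f' (x k)‖ * ‖d‖ := real_inner_le_norm _ _
        _ ≤ ‖f' ξ - f' (x k)‖ * M := by
            exact mul_le_mul_of_nonneg_left (hdM k) (norm_nonneg _)
        _ < ((1 - β) * δ / M) * M := by
            apply mul_lt_mul_of_pos_right _ hM0
            rw [← dist_eq_norm]; exact hnd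
        _ = (1 - β) * δ := by field_simp
    have hsum : ⟪f' ξ, d⟫ = ⟪f' (x k), d⟫ + ⟪f' ξ - f' (x k), d⟫ := by
      rw [inner_sub_left]; ring
    have hdb := hdneg k
    have hfx : ⟪f' ξ, d⟫ ≤ β * ⟪f' (x k), d⟫ := by
      rw [hsum]; nlinarith [hdb]
    -- conclude from the slope equation
    rw [sub_zero] at hslope
    have hgt : g t - g 0 = t * ⟪f' ξ, d⟫ := by
      rw [hslope, mul_comm, div_mul_cancel₀ _ ht0.ne']
    have hg0 : g 0 = f (x k) := by simp [hg]
    have hgt' : g t = f (x k + t • d) := rfl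
    have := hgt
    rw [hg0, hgt'] at this
    have htnn : 0 ≤ t := ht0.le
    nlinarith [mul_le_mul_of_nonneg_left hfx htnn]
  -- uniform lower bound on step sizes
  set c0 : ℝ := min 1 (θ * (ε / M)) with hc0def
  have hc00 : 0 < c0 := lt_min one_pos (by positivity)
  have hlb : ∀ k, c0 ≤ lam k := by
    intro k
    rw [hlam k]
    rcases Nat.eq_zero_or_pos (m k) with h0 | hpos
    · rw [h0, pow_zero]; exact min_le_left _ _
    · obtain ⟨j, hj⟩ : ∃ j, m k = j + 1 := ⟨m k - 1, (Nat.succ_pred_eq_of_pos hpos).symm⟩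
      have hfail := hmmin k j (by omega)
      have hθj0 : 0 < θ ^ j := pow_pos hθ0 j
      have hθj1 : θ ^ j ≤ 1 := pow_le_one₀ hθ0.le hθ1.le
      have hbig : ε ≤ θ ^ j * M := by
        by_contra h
        push_neg at h
        exact hfail (claim k (θ ^ j) hθj0 hθj1 (by linarith))
      have : θ * (ε / M) ≤ θ ^ (j + 1) := by
        rw [pow_succ, mul_comm (θ ^ j) θ]
        apply mul_le_mul_of_nonneg_left _ hθ0.le
        rw [div_le_iff₀ hM0]
        exact hbig
      rw [hj]
      exact (min_le_right 1 _).trans this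
  -- descent inequality
  have hq0 : 0 < β * c0 * δ := by positivity
  have hdesc : ∀ k, f (x (k + 1)) ≤ f (x k) - β * c0 * δ := by
    intro k
    have h1 := harm k
    rw [hstep k, hlam k]
    have hdb := hdneg k
    have hθm0 : 0 < θ ^ m k := pow_pos hθ0 _
    have hlamk : c0 ≤ θ ^ m k := by rw [← hlam k]; exact hlb k
    have : β * θ ^ m k * ⟪f' (x k), z k - x k⟫ ≤ - (β * c0 * δ) := by
      calc β * θ ^ m k * ⟪f' (x k), z k - x k⟫ ≤ β * θ ^ m k * (-δ) := by
            apply mul_le_mul_of_nonneg_left hdb (by positivity)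
        _ ≤ - (β * c0 * δ) := by nlinarith
    linarith
  -- iterate the descent
  have hiter : ∀ k, f (x k) ≤ f (x 0) - k * (β * c0 * δ) := by
    intro k
    induction k with
    | zero => simp
    | succ k ih =>
      have := hdesc k
      push_cast
      push_cast at ih
      linarith
  -- lower bound for f on D
  obtain ⟨p, hpD, hpmin⟩ := hDcomp.exists_isMinOn hDne hfc
  have hlow : ∀ k, f p ≤ f (x k) := fun k => hpmin (hxD k)
  -- contradiction
  obtain ⟨N, hN⟩ := exists_nat_gt ((f (x 0) - f p) / (β * c0 * δ))
  have h1 := hiter N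
  have h2 := hlow N
  have h3 : (f (x 0) - f p) < N * (β * c0 * δ) := by
    rw [div_lt_iff₀ hq0] at hN
    exact hN
  linarith
end

section
/- Let {w^p} and {δ_p} be such that δ_p > 0, δ_p → 0, each w^p ∈ D, f(w^{p+1}) ≤ f(w^p) for all p, and μ(w^p) < δ_p for every p (the restart condition of method (CGMI)). Then {w^p} has limit points and every limit point of {w^p} belongs to D⁰. -/
open Filter RealInnerProductSpace

/-- Let `{w^p}` and `{δ_p}` be such that `δ_p > 0`, `δ_p → 0`, each
`w^p ∈ D`, `f(w^{p+1}) ≤ f(w^p)` for all `p`, and `μ(w^p) < δ_p` for every `p` (the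
restart condition of method (CGMI)), where `μ(x) = max_{y ∈ D} ⟪f'(x), x − y⟫`.
Then `{w^p}` has limit points and every limit point of `{w^p}` belongs to `D⁰`. -/
theorem stmt_12 {n : ℕ} (D : Set (EuclideanSpace ℝ (Fin n)))
    (hDne : D.Nonempty) (hDconv : Convex ℝ D) (hDcl : IsClosed D)
    (hDbd : Bornology.IsBounded D)
    (f : EuclideanSpace ℝ (Fin n) → ℝ)
    (f' : EuclideanSpace ℝ (Fin n) → EuclideanSpace ℝ (Fin n))
    (hf : ∀ x ∈ D, HasGradientAt f (f' x) x)
    (hf' : ContinuousOn f' D)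
    (w : ℕ → EuclideanSpace ℝ (Fin n)) (δ : ℕ → ℝ)
    (hδpos : ∀ p, 0 < δ p) (hδ0 : Tendsto δ atTop (nhds 0))
    (hwD : ∀ p, w p ∈ D)
    (hdecr : ∀ p, f (w (p + 1)) ≤ f (w p))
    (hrestart : ∀ p, sSup ((fun y => ⟪f' (w p), w p - y⟫) '' D) < δ p) :
    (∃ w' : EuclideanSpace ℝ (Fin n), ∃ φ : ℕ → ℕ, StrictMono φ ∧
        Tendsto (w ∘ φ) atTop (nhds w')) ∧
    (∀ (w' : EuclideanSpace ℝ (Fin n)) (φ : ℕ → ℕ), StrictMono φ →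
        Tendsto (w ∘ φ) atTop (nhds w') →
        w' ∈ D ∧ ∀ u ∈ D, 0 ≤ ⟪f' w', u - w'⟫) := by

  have hDcomp : IsCompact D := Metric.isCompact_of_isClosed_isBounded hDcl hDbd
  constructor
  · obtain ⟨x, hx, φ, hφ, hconv⟩ := hDcomp.tendsto_subseq hwD
    exact ⟨x, φ, hφ, hconv⟩
  · intro w' φ hφ hconv
    have hw'D : w' ∈ D := hDcl.mem_of_tendsto hconv (Eventually.of_forall fun k => hwD (φ k))
    refine ⟨hw'D, fun u hu => ?_⟩
    -- pointwise bound along the subsequence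
    have hbd : ∀ k, ⟪f' (w (φ k)), w (φ k) - u⟫ < δ (φ k) := by
      intro k
      refine lt_of_le_of_lt ?_ (hrestart (φ k))
      have hBdd : BddAbove ((fun y => ⟪f' (w (φ k)), w (φ k) - y⟫) '' D) := by
        have hcont : Continuous fun y => ⟪f' (w (φ k)), w (φ k) - y⟫ := by
          exact continuous_const.inner (continuous_const.sub continuous_id)
        exact (hDcomp.image hcont).bddAbove
      exact le_csSup hBdd ⟨u, hu, rfl⟩
    -- convergence of the inner products
    have hgrad : Tendsto (fun k => f' (w (φ k))) atTop (nhds (f' w')) := by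
      have := (hf' w' hw'D).tendsto
      exact this.comp (tendsto_nhdsWithin_iff.2 ⟨hconv, Eventually.of_forall fun k => hwD (φ k)⟩)
    have hinner : Tendsto (fun k => ⟪f' (w (φ k)), w (φ k) - u⟫) atTop
        (nhds ⟪f' w', w' - u⟫) := by
      exact Tendsto.inner hgrad (hconv.sub tendsto_const_nhds)
    have hδφ : Tendsto (fun k => δ (φ k)) atTop (nhds 0) :=
      hδ0.comp hφ.tendsto_atTop
    have hle : ⟪f' w', w' - u⟫ ≤ 0 :=
      le_of_tendsto_of_tendsto' hinner hδφ fun k => (hbd k).le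
    have : ⟪f' w', u - w'⟫ = -⟪f' w', w' - u⟫ := by
      rw [← inner_neg_right]; congr 1; abel
    rw [this]; linarith
end

section
/- Let {w^p} and {δ_p} be such that δ_p > 0, δ_p → 0, each w^p ∈ D, f(w^{p+1}) ≤ f(w^p) for all p, and μ(w^p) < δ_p for every p (the restart condition of method (CGMI)). If f is pseudo-convex on D, then every limit point of {w^p} belongs to D* and lim_{p→∞} f(w^p) = f*. -/
open Filter RealInnerProductSpace

/-- Let `{w^p}` and `{δ_p}` be such that `δ_p > 0`, `δ_p → 0`, each
`w^p ∈ D`, `f(w^{p+1}) ≤ f(w^p)` for all `p`, and `μ(w^p) < δ_p` for every `p` (the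
restart condition of method (CGMI)), where `μ(x) = max_{y ∈ D} ⟪f'(x), x − y⟫`.
If `f` is pseudo-convex on `D`, then every limit point of `{w^p}` belongs to `D*` and
`lim_{p→∞} f(w^p) = f*`. -/
theorem stmt_13 {n : ℕ} (D : Set (EuclideanSpace ℝ (Fin n)))
    (hDne : D.Nonempty) (hDconv : Convex ℝ D) (hDcl : IsClosed D)
    (hDbd : Bornology.IsBounded D)
    (f : EuclideanSpace ℝ (Fin n) → ℝ)
    (f' : EuclideanSpace ℝ (Fin n) → EuclideanSpace ℝ (Fin n))
    (hf : ∀ x ∈ D, HasGradientAt f (f' x) x)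
    (hf' : ContinuousOn f' D)
    (hpc : ∀ x ∈ D, ∀ y ∈ D, 0 ≤ ⟪f' x, y - x⟫ → f x ≤ f y)
    (w : ℕ → EuclideanSpace ℝ (Fin n)) (δ : ℕ → ℝ)
    (hδpos : ∀ p, 0 < δ p) (hδ0 : Tendsto δ atTop (nhds 0))
    (hwD : ∀ p, w p ∈ D)
    (hdecr : ∀ p, f (w (p + 1)) ≤ f (w p))
    (hrestart : ∀ p, sSup ((fun y => ⟪f' (w p), w p - y⟫) '' D) < δ p) :
    (∀ (w' : EuclideanSpace ℝ (Fin n)) (φ : ℕ → ℕ), StrictMono φ →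
        Tendsto (w ∘ φ) atTop (nhds w') →
        w' ∈ D ∧ ∀ u ∈ D, f w' ≤ f u) ∧
    Tendsto (fun p => f (w p)) atTop (nhds (sInf (f '' D))) := by
  have hDcomp : IsCompact D := Metric.isCompact_of_isClosed_isBounded hDcl hDbd
  have hfc : ContinuousOn f D := fun x hx => (hf x hx).continuousAt.continuousWithinAt
  -- each μ bound: for u ∈ D, ⟪f'(w p), w p - u⟫ < δ p
  have hmu : ∀ p, ∀ u ∈ D, ⟪f' (w p), w p - u⟫ < δ p := by
    intro p u hu
    refine lt_of_le_of_lt ?_ (hrestart p)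
    have hcont : ContinuousOn (fun y => ⟪f' (w p), w p - y⟫) D := by
      apply Continuous.continuousOn
      exact continuous_const.inner (continuous_const.sub continuous_id)
    have hbdd : BddAbove ((fun y => ⟪f' (w p), w p - y⟫) '' D) :=
      (hDcomp.image_of_continuousOn hcont).bddAbove
    exact le_csSup hbdd ⟨u, hu, rfl⟩
  -- Part 1
  have part1 : ∀ (w' : EuclideanSpace ℝ (Fin n)) (φ : ℕ → ℕ), StrictMono φ →
      Tendsto (w ∘ φ) atTop (nhds w') → w' ∈ D ∧ ∀ u ∈ D, f w' ≤ f u := by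
    intro w' φ hφ htend
    have hw'D : w' ∈ D := hDcl.mem_of_tendsto htend (Eventually.of_forall fun k => hwD (φ k))
    refine ⟨hw'D, fun u hu => ?_⟩
    have htendD : Tendsto (w ∘ φ) atTop (nhdsWithin w' D) := by
      rw [tendsto_nhdsWithin_iff]
      exact ⟨htend, Eventually.of_forall fun k => hwD (φ k)⟩
    have hgrad : Tendsto (fun k => f' (w (φ k))) atTop (nhds (f' w')) :=
      ((hf'.continuousWithinAt hw'D).tendsto).comp htendD
    have hinner : Tendsto (fun k => ⟪f' (w (φ k)), w (φ k) - u⟫) atTop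
        (nhds ⟪f' w', w' - u⟫) :=
      hgrad.inner (htend.sub tendsto_const_nhds)
    have hδφ : Tendsto (fun k => δ (φ k)) atTop (nhds 0) :=
      hδ0.comp hφ.tendsto_atTop
    have hle : ⟪f' w', w' - u⟫ ≤ 0 :=
      le_of_tendsto_of_tendsto' hinner hδφ fun k => le_of_lt (hmu (φ k) u hu)
    have : 0 ≤ ⟪f' w', u - w'⟫ := by
      rw [(neg_sub w' u).symm, inner_neg_right]
      linarith
    exact hpc w' hw'D u hu this
  refine ⟨part1, ?_⟩
  -- Part 2
  have hanti : Antitone (fun p => f (w p)) := antitone_nat_of_succ_le hdecr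
  have himg : IsCompact (f '' D) := hDcomp.image_of_continuousOn hfc
  have hbdd : BddBelow (f '' D) := himg.bddBelow
  have hlb : ∀ p, sInf (f '' D) ≤ f (w p) := fun p => csInf_le hbdd ⟨w p, hwD p, rfl⟩
  have hbddrange : BddBelow (Set.range fun p => f (w p)) := by
    refine ⟨sInf (f '' D), ?_⟩
    rintro x ⟨p, rfl⟩; exact hlb p
  have hconv : Tendsto (fun p => f (w p)) atTop (nhds (⨅ p, f (w p))) :=
    tendsto_atTop_ciInf hanti hbddrange
  -- get a convergent subsequence
  obtain ⟨w', hw'D, φ, hφ, htend⟩ := hDcomp.tendsto_subseq hwD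
  obtain ⟨_, hmin⟩ := part1 w' φ hφ htend
  have hfw' : f w' = sInf (f '' D) := by
    refine le_antisymm (le_csInf (hDne.image f) ?_) (csInf_le hbdd ⟨w', hw'D, rfl⟩)
    rintro x ⟨u, hu, rfl⟩; exact hmin u hu
  have htendf : Tendsto (fun k => f (w (φ k))) atTop (nhds (f w')) := by
    have htendD : Tendsto (w ∘ φ) atTop (nhdsWithin w' D) := by
      rw [tendsto_nhdsWithin_iff]
      exact ⟨htend, Eventually.of_forall fun k => hwD (φ k)⟩
    exact ((hfc.continuousWithinAt hw'D).tendsto).comp htendD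
  have htendf' : Tendsto (fun k => f (w (φ k))) atTop (nhds (⨅ p, f (w p))) :=
    hconv.comp hφ.tendsto_atTop
  have : (⨅ p, f (w p)) = sInf (f '' D) := by
    rw [← hfw']; exact tendsto_nhds_unique htendf' htendf
  rwa [this] at hconv
end

section
/- Each stage of the combined inexact adaptive-step method (CGMIS) is finite: fix δ > 0, β ∈ (0,1), a positive sequence {τ_l} → 0 with τ₀ ∈ (0,1), and λ₀ ∈ (0, τ₀]. There is no infinite sequence {x^k} ⊂ D with points z^k ∈ D such that for every k: ⟨f'(x^k), x^k − z^k⟩ ≥ δ, d^k = z^k − x^k, x^{k+1} = x^k + λ_k d^k, and there is a nondecreasing index function k ↦ l(k) with l(0) = 0 such that if f(x^{k+1}) ≤ f(x^k) + β λ_k ⟨f'(x^k), d^k⟩ then l(k+1) = l(k) and λ_{k+1} ∈ [λ_k, τ_{l(k)}], and otherwise l(k+1) = l(k) + 1 and λ_{k+1} ∈ (0, min{λ_k, τ_{l(k)+1}}]. -/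
open Filter RealInnerProductSpace

/-- Each stage of the combined inexact adaptive-step method (CGMIS) is
finite: fix `δ > 0`, `β ∈ (0,1)`, a positive sequence `{τ_l} → 0` with `τ₀ ∈ (0,1)`,
and `λ₀ ∈ (0, τ₀]`.  There is no infinite sequence `{x^k} ⊂ D` with points `z^k ∈ D`
such that for every `k`: `⟪f'(x^k), x^k − z^k⟫ ≥ δ`, `d^k = z^k − x^k`,
`x^{k+1} = x^k + λ_k d^k`, and there is a nondecreasing index function `k ↦ l(k)` with
`l(0) = 0` such that if `f(x^{k+1}) ≤ f(x^k) + β λ_k ⟪f'(x^k), d^k⟫` then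
`l(k+1) = l(k)` and `λ_{k+1} ∈ [λ_k, τ_{l(k)}]`, and otherwise `l(k+1) = l(k) + 1` and
`λ_{k+1} ∈ (0, min{λ_k, τ_{l(k)+1}}]`. -/
theorem stmt_17 {n : ℕ} (D : Set (EuclideanSpace ℝ (Fin n)))
    (hDne : D.Nonempty) (hDconv : Convex ℝ D) (hDcl : IsClosed D)
    (hDbd : Bornology.IsBounded D)
    (f : EuclideanSpace ℝ (Fin n) → ℝ)
    (f' : EuclideanSpace ℝ (Fin n) → EuclideanSpace ℝ (Fin n))
    (hf : ∀ x ∈ D, HasGradientAt f (f' x) x)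
    (hf' : ContinuousOn f' D)
    (β δ : ℝ) (hβ : β ∈ Set.Ioo (0 : ℝ) 1) (hδ : 0 < δ)
    (τ : ℕ → ℝ) (hτpos : ∀ l, 0 < τ l) (hτ0 : Tendsto τ atTop (nhds 0))
    (hτ01 : τ 0 ∈ Set.Ioo (0 : ℝ) 1)
    (x z : ℕ → EuclideanSpace ℝ (Fin n)) (lam : ℕ → ℝ) (l : ℕ → ℕ)
    (hxD : ∀ k, x k ∈ D) (hzD : ∀ k, z k ∈ D)
    (hlam0 : lam 0 ∈ Set.Ioc (0 : ℝ) (τ 0))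
    (hgap : ∀ k, δ ≤ ⟪f' (x k), x k - z k⟫)
    (hstep : ∀ k, x (k + 1) = x k + lam k • (z k - x k))
    (hlmono : Monotone l) (hl0 : l 0 = 0)
    (hrule : ∀ k,
      (f (x (k + 1)) ≤ f (x k) + β * lam k * ⟪f' (x k), z k - x k⟫ →
        l (k + 1) = l k ∧ lam (k + 1) ∈ Set.Icc (lam k) (τ (l k))) ∧
      (¬ (f (x (k + 1)) ≤ f (x k) + β * lam k * ⟪f' (x k), z k - x k⟫) →
        l (k + 1) = l k + 1 ∧ lam (k + 1) ∈ Set.Ioc (0 : ℝ) (min (lam k) (τ (l k + 1))))) :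
    False := by
  classical
  obtain ⟨hβ0, hβ1⟩ := hβ
  -- inner product form: ⟪f' xk, z k - x k⟫ ≤ -δ
  have hgap' : ∀ k, ⟪f' (x k), z k - x k⟫ ≤ -δ := by
    intro k
    have := hgap k
    have h2 : ⟪f' (x k), x k - z k⟫ = -⟪f' (x k), z k - x k⟫ := by
      rw [← inner_neg_right]; congr 1; abel
    linarith [h2 ▸ this]
  -- positivity of lam
  have hlampos : ∀ k, 0 < lam k := by
    intro k
    induction k with
    | zero => exact hlam0.1
    | succ k ih =>
      by_cases h : f (x (k + 1)) ≤ f (x k) + β * lam k * ⟪f' (x k), z k - x k⟫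
      · exact lt_of_lt_of_le ih ((hrule k).1 h).2.1
      · exact ((hrule k).2 h).2.1
  -- compactness
  have hDcompact : IsCompact D := Metric.isCompact_iff_isClosed_bounded.mpr ⟨hDcl, hDbd⟩
  -- bound on diameters
  obtain ⟨R, hR⟩ := hDbd.subset_closedBall (0 : EuclideanSpace ℝ (Fin n))
  set C : ℝ := 2 * max R 1 with hC
  have hCpos : 0 < C := by positivity
  have hCbd : ∀ a ∈ D, ∀ b ∈ D, ‖a - b‖ ≤ C := by
    intro a ha b hb
    have h1 : ‖a‖ ≤ R := by simpa using hR ha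
    have h2 : ‖b‖ ≤ R := by simpa using hR hb
    have := norm_sub_le a b
    have hRm : R ≤ max R 1 := le_max_left _ _
    calc ‖a - b‖ ≤ ‖a‖ + ‖b‖ := norm_sub_le a b
      _ ≤ C := by rw [hC]; linarith
  -- f is bounded below on D
  have hfc : ContinuousOn f D := fun y hy =>
    ((hf y hy).hasFDerivAt.continuousAt).continuousWithinAt
  obtain ⟨x₀, hx₀D, hx₀min⟩ := hDcompact.exists_isMinOn hDne hfc
  set m : ℝ := f x₀ with hm
  have hmle : ∀ y ∈ D, m ≤ f y := fun y hy => hx₀min hy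
  -- the Armijo predicate
  set P : ℕ → Prop := fun k =>
    f (x (k + 1)) ≤ f (x k) + β * lam k * ⟪f' (x k), z k - x k⟫ with hP
  by_cases hev : ∃ K, ∀ k, K ≤ k → P k
  · -- Case A: eventual success, f decreases linearly to -∞
    obtain ⟨K, hK⟩ := hev
    have hlmonoK : ∀ j : ℕ, lam K ≤ lam (K + j) := by
      intro j
      induction j with
      | zero => simp
      | succ j ih => exact le_trans ih (((hrule (K + j)).1 (hK _ (Nat.le_add_right _ _))).2.1)
    have hdec : ∀ j : ℕ, f (x (K + j)) ≤ f (x K) - j * (β * lam K * δ) := by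
      intro j
      induction j with
      | zero => simp
      | succ j ih =>
        have hPj := hK (K + j) (Nat.le_add_right _ _)
        have h1 : β * lam (K + j) * ⟪f' (x (K + j)), z (K + j) - x (K + j)⟫ ≤
            -(β * lam K * δ) := by
          have hg := hgap' (K + j)
          have hl := hlmonoK j
          have hlp := hlampos K
          have e1 : β * lam (K + j) * ⟪f' (x (K + j)), z (K + j) - x (K + j)⟫ ≤
              β * lam (K + j) * (-δ) :=
            mul_le_mul_of_nonneg_left hg (mul_nonneg hβ0.le (hlampos (K + j)).le)
          have e2 : 0 ≤ β * δ * (lam (K + j) - lam K) :=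
            mul_nonneg (mul_nonneg hβ0.le hδ.le) (sub_nonneg.mpr hl)
          nlinarith [e1, e2]
        have : f (x (K + j + 1)) ≤ f (x (K + j)) - β * lam K * δ := by
          have := hPj
          simp only [hP] at this
          linarith
        have heq : K + (j + 1) = K + j + 1 := by ring
        rw [heq]
        push_cast
        linarith
    obtain ⟨j, hj⟩ := exists_nat_gt ((f (x K) - m) / (β * lam K * δ))
    have hpos : 0 < β * lam K * δ := mul_pos (mul_pos hβ0 (hlampos K)) hδ
    have h1 : f (x K) - m < j * (β * lam K * δ) := by
      rw [div_lt_iff₀ hpos] at hj; linarith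
    have h2 := hdec j
    have h3 := hmle (x (K + j)) (hxD (K + j))
    linarith
  · -- Case B: failures occur infinitely often
    push_neg at hev
    -- l is unbounded
    have hlub : ∀ N : ℕ, ∃ k, N ≤ l k := by
      intro N
      induction N with
      | zero => exact ⟨0, Nat.zero_le _⟩
      | succ N ih =>
        obtain ⟨k, hk⟩ := ih
        obtain ⟨k', hk', hPk'⟩ := hev k
        have := ((hrule k').2 hPk').1
        exact ⟨k' + 1, by
          have := hlmono hk'
          omega⟩
    have hltop : Tendsto l atTop atTop := tendsto_atTop_atTop_of_monotone hlmono
      (fun b => (hlub b).imp fun k hk => hk)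
    -- lam k ≤ τ (l k)
    have hlamle : ∀ k, lam k ≤ τ (l k) := by
      intro k
      induction k with
      | zero => rw [hl0]; exact hlam0.2
      | succ k ih =>
        by_cases h : P k
        · obtain ⟨he, _, hle⟩ := (hrule k).1 h
          rw [he]; exact hle
        · obtain ⟨he, _, hle⟩ := (hrule k).2 h
          rw [he]
          exact le_trans hle (min_le_right _ _)
    -- lam → 0
    have hlam0' : Tendsto lam atTop (nhds 0) := by
      apply squeeze_zero (fun k => (hlampos k).le) hlamle
      exact hτ0.comp hltop
    -- uniform continuity of f' on D
    have hucf' : UniformContinuousOn f' D := hDcompact.uniformContinuousOn_of_continuous hf'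
    set ε : ℝ := (1 - β) * δ / C with hε
    have hεpos : 0 < ε := div_pos (mul_pos (by linarith) hδ) hCpos
    obtain ⟨η, hηpos, hη⟩ := (Metric.uniformContinuousOn_iff_le).mp hucf' ε hεpos
    -- pick a failure index with lam k small
    have hsmall : ∀ᶠ k in atTop, lam k * C < η := by
      have := hlam0'.eventually (eventually_lt_nhds (show (0:ℝ) < η / C by positivity))
      filter_upwards [this] with k hk
      calc lam k * C < (η / C) * C := by
            exact mul_lt_mul_of_pos_right hk hCpos
        _ = η := by field_simp
    obtain ⟨K, hKs⟩ := eventually_atTop.mp hsmall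
    obtain ⟨k, hkK, hPk⟩ := hev K
    have hsmk : lam k * C < η := hKs k hkK
    -- now establish Armijo at k, contradiction
    apply hPk
    -- segment from x k to x (k+1)
    set s : Set (EuclideanSpace ℝ (Fin n)) := segment ℝ (x k) (x (k + 1)) with hs
    have hsD : s ⊆ D := hDconv.segment_subset (hxD k) (hxD (k + 1))
    have hxks : x k ∈ s := left_mem_segment _ _ _
    have hxk1s : x (k + 1) ∈ s := right_mem_segment _ _ _
    have hnormstep : ‖x (k + 1) - x k‖ ≤ lam k * C := by
      rw [hstep k]
      have : x k + lam k • (z k - x k) - x k = lam k • (z k - x k) := by abel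
      rw [this, norm_smul, Real.norm_eq_abs, abs_of_pos (hlampos k)]
      exact mul_le_mul_of_nonneg_left (hCbd _ (hzD k) _ (hxD k)) (hlampos k).le
    -- all points of segment are η-close to x k
    have hclose : ∀ ξ ∈ s, dist ξ (x k) ≤ η := by
      intro ξ hξ
      obtain ⟨a, b, ha, hb, hab, rfl⟩ := hξ
      have : a • x k + b • x (k + 1) - x k = b • (x (k + 1) - x k) := by
        have haeq : a = 1 - b := by linarith
        rw [haeq]; module
      rw [dist_eq_norm, this, norm_smul, Real.norm_eq_abs, abs_of_nonneg hb]
      calc b * ‖x (k + 1) - x k‖ ≤ 1 * ‖x (k + 1) - x k‖ :=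
          mul_le_mul_of_nonneg_right (by linarith) (norm_nonneg _)
        _ = ‖x (k + 1) - x k‖ := one_mul _
        _ ≤ lam k * C := hnormstep
        _ ≤ η := hsmk.le
    -- mean value estimate
    have hder : ∀ ξ ∈ s, HasFDerivWithinAt f
        ((InnerProductSpace.toDual ℝ _) (f' ξ)) s ξ :=
      fun ξ hξ => ((hf ξ (hsD hξ)).hasFDerivAt).hasFDerivWithinAt
    have hbound : ∀ ξ ∈ s, ‖(InnerProductSpace.toDual ℝ _) (f' ξ) -
        (InnerProductSpace.toDual ℝ _) (f' (x k))‖ ≤ ε := by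
      intro ξ hξ
      rw [← map_sub, (InnerProductSpace.toDual ℝ _).norm_map, ← dist_eq_norm]
      exact hη ξ (hsD hξ) (x k) (hxD k) (hclose ξ hξ)
    have hmvt := Convex.norm_image_sub_le_of_norm_hasFDerivWithin_le' hder hbound
      (convex_segment _ _) hxks hxk1s
    -- unpack
    have hdual : ((InnerProductSpace.toDual ℝ (EuclideanSpace ℝ (Fin n))) (f' (x k)))
        (x (k + 1) - x k) = ⟪f' (x k), x (k + 1) - x k⟫ := rfl
    rw [hdual] at hmvt
    have hinner : ⟪f' (x k), x (k + 1) - x k⟫ = lam k * ⟪f' (x k), z k - x k⟫ := by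
      rw [hstep k]
      have : x k + lam k • (z k - x k) - x k = lam k • (z k - x k) := by abel
      rw [this, real_inner_smul_right]
    have key : f (x (k + 1)) - f (x k) - lam k * ⟪f' (x k), z k - x k⟫ ≤
        ε * (lam k * C) := by
      have h1 : f (x (k + 1)) - f (x k) - lam k * ⟪f' (x k), z k - x k⟫ ≤
          ‖f (x (k + 1)) - f (x k) - ⟪f' (x k), x (k + 1) - x k⟫‖ := by
        rw [hinner]; exact le_abs_self _
      refine le_trans h1 (le_trans hmvt ?_)
      exact mul_le_mul_of_nonneg_left hnormstep hεpos.le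
    -- conclude Armijo
    have hεC : ε * C = (1 - β) * δ := by
      rw [hε]; field_simp
    have hg := hgap' k
    have hl := hlampos k
    have e1 : ε * (lam k * C) = lam k * ((1 - β) * δ) := by rw [← hεC]; ring
    have e2 : lam k * ((1 - β) * (⟪f' (x k), z k - x k⟫ + δ)) ≤ 0 :=
      mul_nonpos_of_nonneg_of_nonpos hl.le
        (mul_nonpos_of_nonneg_of_nonpos (by linarith) (by linarith))
    show f (x (k + 1)) ≤ f (x k) + β * lam k * ⟪f' (x k), z k - x k⟫
    nlinarith [key, hg, hl, e1, e2]
end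

section
/- Let {x^k_s} and {y^k_s} be convergent subsequences of sequences in D with y^{k_s} ∈ Z(x^{k_s}), x^{k_s} → x', y^{k_s} → y', and suppose ⟨f'(x^{k_s}), y^{k_s} − x^{k_s}⟩ → 0. Then x' ∈ D⁰. -/
open Filter RealInnerProductSpace

/-- Let `{x^{k_s}}` and `{y^{k_s}}` be convergent subsequences of
sequences in `D` with `y^{k_s} ∈ Z(x^{k_s})`, `x^{k_s} → x'`, `y^{k_s} → y'`, and
suppose `⟪f'(x^{k_s}), y^{k_s} − x^{k_s}⟫ → 0`.  Then `x' ∈ D⁰`. -/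
theorem stmt_19 {n : ℕ} (D : Set (EuclideanSpace ℝ (Fin n)))
    (hDne : D.Nonempty) (hDconv : Convex ℝ D) (hDcl : IsClosed D)
    (hDbd : Bornology.IsBounded D)
    (f : EuclideanSpace ℝ (Fin n) → ℝ)
    (f' : EuclideanSpace ℝ (Fin n) → EuclideanSpace ℝ (Fin n))
    (hf : ∀ x ∈ D, HasGradientAt f (f' x) x)
    (hf' : ContinuousOn f' D)
    (xk yk : ℕ → EuclideanSpace ℝ (Fin n))
    (x' y' : EuclideanSpace ℝ (Fin n))
    (hxkD : ∀ s, xk s ∈ D)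
    (hyk : ∀ s, yk s ∈ D ∧ ∀ w ∈ D, ⟪f' (xk s), yk s⟫ ≤ ⟪f' (xk s), w⟫)
    (hxlim : Tendsto xk atTop (nhds x'))
    (hylim : Tendsto yk atTop (nhds y'))
    (hinner : Tendsto (fun s => ⟪f' (xk s), yk s - xk s⟫) atTop (nhds 0)) :
    x' ∈ D ∧ ∀ u ∈ D, 0 ≤ ⟪f' x', u - x'⟫ := by
  have hx'D : x' ∈ D := hDcl.mem_of_tendsto hxlim (Eventually.of_forall hxkD)
  refine ⟨hx'D, fun u hu => ?_⟩
  have hgrad : Tendsto (fun s => f' (xk s)) atTop (nhds (f' x')) :=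
    (hf'.continuousWithinAt hx'D).tendsto.comp
      (tendsto_nhdsWithin_of_tendsto_nhds_of_eventually_within _ hxlim
        (Eventually.of_forall hxkD))
  have hR : Tendsto (fun s => ⟪f' (xk s), u - xk s⟫) atTop (nhds ⟪f' x', u - x'⟫) :=
    (hgrad.inner (tendsto_const_nhds.sub hxlim))
  refine le_of_tendsto_of_tendsto hinner hR (Eventually.of_forall fun s => ?_)
  have h := (hyk s).2 u hu
  simp only [inner_sub_right]
  linarith
end
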